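/- arXiv:2209.07973 — 2 statements merged into one kernel-verified Lean document; each statement's English description precedes it below -/
import Mathlib

section
/- For η ~ N(μ, σ²) with σ > 0, the expected value of max(0, η) equals σ·p(μ/σ) + μ·P(μ/σ), where p and P are the PDF and CDF of the standard normal distribution. -/
open MeasureTheory ProbabilityTheory Real

noncomputable def stdPdf (x : ℝ) : ℝ := (Real.sqrt (2 * Real.pi))⁻¹ * Real.exp (-x ^ 2 / 2)

noncomputable def stdCdf (x : ℝ) : ℝ := ∫ t in Set.Iic x, stdPdf t

noncomputable def phiTilde (μ σ : ℝ) : ℝ := σ * stdPdf (μ / σ) + μ * stdCdf (μ / σ)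

open scoped ENNReal NNReal

lemma integrable_expGauss : Integrable (fun x : ℝ => Real.exp (-x ^ 2 / 2)) := by
  refine (integrable_exp_neg_mul_sq (by norm_num : (0:ℝ) < 1/2)).congr ?_
  refine Filter.Eventually.of_forall fun x => ?_
  show Real.exp (-(1/2 : ℝ) * x ^ 2) = Real.exp (-x ^ 2 / 2)
  rw [show -(1/2 : ℝ) * x ^ 2 = -x ^ 2 / 2 by ring]

lemma integrable_mul_expGauss : Integrable (fun x : ℝ => x * Real.exp (-x ^ 2 / 2)) := by
  refine (integrable_mul_exp_neg_mul_sq (by norm_num : (0:ℝ) < 1/2)).congr ?_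
  refine Filter.Eventually.of_forall fun x => ?_
  show x * Real.exp (-(1/2 : ℝ) * x ^ 2) = x * Real.exp (-x ^ 2 / 2)
  rw [show -(1/2 : ℝ) * x ^ 2 = -x ^ 2 / 2 by ring]

lemma integral_Ioi_mul_expGauss (a : ℝ) :
    ∫ x in Set.Ioi a, x * Real.exp (-x ^ 2 / 2) = Real.exp (-a ^ 2 / 2) := by
  have hderiv : ∀ x ∈ Set.Ioi a, HasDerivAt (fun x : ℝ => -Real.exp (-x ^ 2 / 2))
      (x * Real.exp (-x ^ 2 / 2)) x := by
    intro x _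
    have h1 : HasDerivAt (fun x : ℝ => -x ^ 2 / 2) (-x) x := by
      have := ((hasDerivAt_pow 2 x).neg).div_const 2
      simpa using this.congr_deriv (by ring)
    have h2 := h1.exp
    have h3 := h2.neg
    exact h3.congr_deriv (by ring)
  have htend : Filter.Tendsto (fun x : ℝ => -Real.exp (-x ^ 2 / 2)) Filter.atTop (nhds 0) := by
    rw [show (0:ℝ) = -0 by norm_num]
    apply Filter.Tendsto.neg
    have h1 : Filter.Tendsto (fun x : ℝ => x ^ 2 / 2) Filter.atTop Filter.atTop :=
      (Filter.tendsto_pow_atTop two_ne_zero).atTop_div_const (by norm_num)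
    have h2 := Real.tendsto_exp_neg_atTop_nhds_zero.comp h1
    exact h2.congr fun x => by rw [Function.comp_apply, neg_div]
  have hcont : ContinuousWithinAt (fun x : ℝ => -Real.exp (-x ^ 2 / 2)) (Set.Ici a) a :=
    ((Real.continuous_exp.comp (by continuity)).neg).continuousWithinAt
  have := integral_Ioi_of_hasDerivAt_of_tendsto hcont hderiv
    integrable_mul_expGauss.integrableOn htend
  simpa using this

lemma integral_Ioi_expGauss (c : ℝ) :
    ∫ x in Set.Ioi (-c), Real.exp (-x ^ 2 / 2) = ∫ x in Set.Iic c, Real.exp (-x ^ 2 / 2) := by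
  rw [← integral_comp_neg_Iic c (fun x => Real.exp (-x ^ 2 / 2))]
  simp [neg_sq]

lemma key (μ σ : ℝ) (hσ : 0 < σ) :
    ∫ x, stdPdf x * max 0 (σ * x + μ) = σ * stdPdf (μ / σ) + μ * stdCdf (μ / σ) := by
  set K : ℝ := (Real.sqrt (2 * Real.pi))⁻¹ with hK
  set a : ℝ := -(μ / σ) with ha
  have hind : (fun x => stdPdf x * max 0 (σ * x + μ)) =
      Set.indicator (Set.Ioi a) (fun x => stdPdf x * (σ * x + μ)) := by
    funext x
    by_cases hx : x ∈ Set.Ioi a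
    · rw [Set.indicator_of_mem hx]
      have : 0 < σ * x + μ := by
        have : a < x := hx
        rw [ha] at this
        nlinarith [mul_lt_mul_of_pos_left this hσ, mul_div_cancel₀ μ hσ.ne']
      rw [max_eq_right this.le]
    · rw [Set.indicator_of_notMem hx]
      have hxa : x ≤ a := le_of_not_gt hx
      have : σ * x + μ ≤ 0 := by
        rw [ha] at hxa
        nlinarith [mul_le_mul_of_nonneg_left hxa hσ.le, mul_div_cancel₀ μ hσ.ne']
      rw [max_eq_left this, mul_zero]
  rw [hind, integral_indicator measurableSet_Ioi]
  have hsplit : ∀ x : ℝ, stdPdf x * (σ * x + μ) =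
      σ * (x * (K * Real.exp (-x ^ 2 / 2))) + μ * (K * Real.exp (-x ^ 2 / 2)) := by
    intro x; simp only [stdPdf, hK]; ring
  simp_rw [hsplit]
  have hI1 : Integrable (fun x => σ * (x * (K * Real.exp (-x ^ 2 / 2)))) := by
    have : (fun x : ℝ => σ * (x * (K * Real.exp (-x ^ 2 / 2)))) =
        fun x => (σ * K) * (x * Real.exp (-x ^ 2 / 2)) := by funext x; ring
    rw [this]; exact integrable_mul_expGauss.const_mul _
  have hI2 : Integrable (fun x => μ * (K * Real.exp (-x ^ 2 / 2))) :=
    (integrable_expGauss.const_mul K).const_mul μ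
  rw [integral_add hI1.integrableOn hI2.integrableOn, integral_const_mul, integral_const_mul]
  have h1 : ∫ x in Set.Ioi a, x * (K * Real.exp (-x ^ 2 / 2)) = stdPdf (μ / σ) := by
    have : (fun x : ℝ => x * (K * Real.exp (-x ^ 2 / 2))) =
        fun x => K * (x * Real.exp (-x ^ 2 / 2)) := by funext x; ring
    rw [this, integral_const_mul, integral_Ioi_mul_expGauss]
    simp [stdPdf, hK, ha, neg_sq]
  have h2 : ∫ x in Set.Ioi a, K * Real.exp (-x ^ 2 / 2) = stdCdf (μ / σ) := by
    rw [integral_const_mul, ha, integral_Ioi_expGauss]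
    simp only [stdCdf, stdPdf, ← hK]
    rw [integral_const_mul]
  rw [h1, h2]

theorem expected_relu_gaussian (μ σ : ℝ) (hσ : 0 < σ) :
    ∫ x, max 0 x ∂(gaussianReal μ (Real.toNNReal (σ ^ 2))) =
      σ * stdPdf (μ / σ) + μ * stdCdf (μ / σ) := by
  have hmap : gaussianReal μ (Real.toNNReal (σ ^ 2)) =
      Measure.map (fun z => σ * z + μ) (gaussianReal 0 1) := by
    have h1 : (gaussianReal 0 1).map (σ * ·) = gaussianReal 0 (Real.toNNReal (σ ^ 2)) := by
      rw [gaussianReal_map_const_mul σ, mul_zero]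
      congr 1
      ext
      simp [Real.coe_toNNReal _ (sq_nonneg σ)]
    have h2 : (gaussianReal 0 (Real.toNNReal (σ ^ 2))).map (· + μ) =
        gaussianReal μ (Real.toNNReal (σ ^ 2)) := by
      rw [gaussianReal_map_add_const μ, zero_add]
    rw [← h2, ← h1, Measure.map_map (by fun_prop) (by fun_prop)]
    rfl
  have hg : AEStronglyMeasurable (fun x : ℝ => max 0 x)
      (Measure.map (fun z => σ * z + μ) (gaussianReal 0 1)) :=
    (measurable_const.max measurable_id).aestronglyMeasurable
  rw [hmap, integral_map (by fun_prop) hg]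
  rw [gaussianReal_of_var_ne_zero 0 one_ne_zero]
  have hpdf : gaussianPDF 0 1 = fun x => ((Real.toNNReal (gaussianPDFReal 0 1 x) : ℝ≥0) : ℝ≥0∞) :=
    rfl
  rw [hpdf, integral_withDensity_eq_integral_smul
    ((measurable_gaussianPDFReal 0 1).real_toNNReal) _]
  have heq : ∀ x : ℝ, (Real.toNNReal (gaussianPDFReal 0 1 x)) • max 0 (σ * x + μ) =
      stdPdf x * max 0 (σ * x + μ) := by
    intro x
    rw [NNReal.smul_def, Real.coe_toNNReal _ (gaussianPDFReal_nonneg 0 1 x)]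
    congr 1
    simp only [gaussianPDFReal, stdPdf, NNReal.coe_one, mul_one, sub_zero]
  simp_rw [heq]
  exact key μ σ hσ
end

section
/- The function φ̃(μ, σ) := σ·p(μ/σ) + μ·P(μ/σ) is monotonically increasing in σ for each fixed μ, i.e., if 0 < σ₁ ≤ σ₂ then φ̃(μ, σ₁) ≤ φ̃(μ, σ₂). -/
open MeasureTheory ProbabilityTheory Real

lemma stdPdf_pos (x : ℝ) : 0 < stdPdf x := by
  unfold stdPdf
  positivity

lemma continuous_stdPdf : Continuous stdPdf := by
  unfold stdPdf
  continuity

lemma integrable_stdPdf : Integrable stdPdf := by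
  have h : Integrable (fun x : ℝ => Real.exp (-(1/2 : ℝ) * x ^ 2)) :=
    integrable_exp_neg_mul_sq (by norm_num)
  have := h.const_mul (Real.sqrt (2 * Real.pi))⁻¹
  convert this using 2 with x
  unfold stdPdf
  ring_nf

lemma hasDerivAt_stdPdf (x : ℝ) : HasDerivAt stdPdf (-x * stdPdf x) x := by
  have h1 : HasDerivAt (fun y : ℝ => -y ^ 2 / 2) (-x) x := by
    have := ((hasDerivAt_pow 2 x).neg).div_const 2
    refine this.congr_deriv ?_
    simp; ring
  have h2 := (h1.exp).const_mul (Real.sqrt (2 * Real.pi))⁻¹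
  refine h2.congr_deriv ?_
  unfold stdPdf; ring

lemma hasDerivAt_stdCdf (x : ℝ) : HasDerivAt stdCdf (stdPdf x) x := by
  have key : ∀ y : ℝ, stdCdf y = (∫ t in (0:ℝ)..y, stdPdf t) + stdCdf 0 := by
    intro y
    unfold stdCdf
    rw [← intervalIntegral.integral_Iic_sub_Iic integrable_stdPdf.integrableOn
      integrable_stdPdf.integrableOn]
    ring
  have h : HasDerivAt (fun y : ℝ => (∫ t in (0:ℝ)..y, stdPdf t) + stdCdf 0) (stdPdf x) x := by
    refine HasDerivAt.add_const _ ?_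
    exact intervalIntegral.integral_hasDerivAt_right
      (integrable_stdPdf.intervalIntegrable)
      (continuous_stdPdf.stronglyMeasurableAtFilter _ _)
      continuous_stdPdf.continuousAt
  exact h.congr_of_eventuallyEq (Filter.Eventually.of_forall key)

lemma hasDerivAt_phiTilde (μ σ : ℝ) (hσ : σ ≠ 0) :
    HasDerivAt (fun s => phiTilde μ s) (stdPdf (μ / σ)) σ := by
  have hdiv : HasDerivAt (fun s : ℝ => μ / s) (-μ / σ ^ 2) σ := by
    have := (hasDerivAt_inv hσ).const_mul μ
    have heq : (fun s : ℝ => μ / s) = fun s : ℝ => μ * s⁻¹ := by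
      funext s; rw [div_eq_mul_inv]
    rw [heq]
    refine this.congr_deriv ?_
    field_simp
  have h1 : HasDerivAt (fun s : ℝ => s * stdPdf (μ / s))
      (1 * stdPdf (μ / σ) + σ * (-(μ / σ) * stdPdf (μ / σ) * (-μ / σ ^ 2))) σ :=
    (hasDerivAt_id σ).mul ((hasDerivAt_stdPdf (μ / σ)).comp σ hdiv)
  have h2 : HasDerivAt (fun s : ℝ => μ * stdCdf (μ / s))
      (μ * (stdPdf (μ / σ) * (-μ / σ ^ 2))) σ :=
    ((hasDerivAt_stdCdf (μ / σ)).comp σ hdiv).const_mul μ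
  have h := h1.add h2
  refine h.congr_deriv ?_
  field_simp
  ring

theorem phiTilde_mono_in_sigma (μ σ₁ σ₂ : ℝ) (h1 : 0 < σ₁) (h12 : σ₁ ≤ σ₂) :
    phiTilde μ σ₁ ≤ phiTilde μ σ₂ := by
  rcases eq_or_lt_of_le h12 with rfl | hlt
  · exact le_rfl
  have hmono : StrictMonoOn (fun s => phiTilde μ s) (Set.Ici σ₁) := by
    apply StrictMonoOn.mono ?_ (le_refl _)
    refine strictMonoOn_of_deriv_pos (convex_Ici σ₁) ?_ ?_
    · intro x hx
      have hx0 : (0:ℝ) < x := lt_of_lt_of_le h1 hx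
      exact (hasDerivAt_phiTilde μ x hx0.ne').continuousAt.continuousWithinAt
    · intro x hx
      rw [interior_Ici] at hx
      have hx0 : (0:ℝ) < x := h1.trans hx
      rw [(hasDerivAt_phiTilde μ x hx0.ne').deriv]
      exact stdPdf_pos _
  exact (hmono (Set.self_mem_Ici) (le_of_lt hlt) hlt).le
end
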